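/- A finite nonempty set of odd integers is the imbalance set of some tournament if and only if it contains at least one positive integer and at least one negative integer. -/

import Mathlib

/-- A tournament on `Fin n`: loopless, and between any two distinct vertices
there is exactly one arc. -/
def IsTournament {n : ℕ} (r : Fin n → Fin n → Bool) : Prop :=
  (∀ i, r i i = false) ∧ ∀ i j : Fin n, i ≠ j → (r i j = !(r j i))

/-- The score (outdegree) of vertex `i`. -/
def outdeg {n : ℕ} (r : Fin n → Fin n → Bool) (i : Fin n) : ℕ :=
  (Finset.univ.filter fun j => r i j = true).card

/-- The indegree of vertex `i`. -/
def indeg {n : ℕ} (r : Fin n → Fin n → Bool) (i : Fin n) : ℕ :=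
  (Finset.univ.filter fun j => r j i = true).card

/-- The imbalance of vertex `i`: outdegree minus indegree. -/
def imbalance {n : ℕ} (r : Fin n → Fin n → Bool) (i : Fin n) : ℤ :=
  (outdeg r i : ℤ) - (indeg r i : ℤ)

/-- The imbalance set of a digraph. -/
def imbalanceSet {n : ℕ} (r : Fin n → Fin n → Bool) : Finset ℤ :=
  Finset.image (imbalance r) Finset.univ

set_option linter.unusedSectionVars false
set_option linter.unusedVariables false
namespace OddImb

open Finset

/-- signed arc indicator -/
def ebal {α : Type*} (r : α → α → Bool) (v w : α) : ℤ :=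
  (if r v w then 1 else 0) - (if r w v then 1 else 0)

/-- imbalance as a sum, for a general fintype -/
def imbV {α : Type*} [Fintype α] (r : α → α → Bool) (v : α) : ℤ :=
  ∑ w, ebal r v w

lemma imbalance_eq_imbV {n : ℕ} (r : Fin n → Fin n → Bool) (i : Fin n) :
    imbalance r i = imbV r i := by
  unfold imbalance imbV ebal outdeg indeg
  rw [Finset.sum_sub_distrib, Finset.sum_boole, Finset.sum_boole]

/-- the rotational regular tournament relation on `Fin m`, expressed on ℕ -/
def regN (m x i : ℕ) : Bool :=
  decide (1 ≤ (m - x + i) % m ∧ (m - x + i) % m ≤ (m - 1) / 2)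

lemma regN_self (m x : ℕ) (hx : x ≤ m) : regN m x x = false := by
  unfold regN
  have h : (m - x + x) % m = 0 := by
    rw [show m - x + x = m by omega, Nat.mod_self]
  simp [h]

lemma mod_helper (m x y : ℕ) (hx : x < m) (hy : y < m) :
    (m - x + y) % m = if x ≤ y then y - x else m - (x - y) := by
  rcases le_or_gt x y with h | h
  · rw [if_pos h, show m - x + y = (y - x) + m by omega, Nat.add_mod_right,
      Nat.mod_eq_of_lt (by omega)]
  · rw [if_neg (by omega), Nat.mod_eq_of_lt (by omega)]
    omega

lemma regN_antisymm (m k x y : ℕ) (hm : m = 2 * k + 1) (hx : x < m) (hy : y < m)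
    (hxy : x ≠ y) : regN m x y = !(regN m y x) := by
  unfold regN
  rw [← decide_not, decide_eq_decide, mod_helper m x y hx hy, mod_helper m y x hy hx]
  have hk : (m - 1) / 2 = k := by omega
  rw [hk]
  split_ifs <;> omega

lemma reg_sum_out (m k : ℕ) (hm : m = 2 * k + 1) (x : Fin m) :
    ∑ i : Fin m, (if regN m x.val i.val then (1 : ℤ) else 0) = k := by
  subst hm
  have key : ∀ i : Fin (2 * k + 1),
      (if regN (2 * k + 1) x.val i.val then (1 : ℤ) else 0)
        = (fun d : Fin (2 * k + 1) => if 1 ≤ d.val ∧ d.val ≤ k then (1 : ℤ) else 0)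
            ((Equiv.subRight x) i) := by
    intro i
    simp only [Equiv.subRight_apply, Fin.sub_def, regN, decide_eq_true_eq]
    have hk : (2 * k + 1 - 1) / 2 = k := by omega
    rw [hk]
  have h2 : ∑ i : Fin (2 * k + 1),
      (fun d : Fin (2 * k + 1) => if 1 ≤ d.val ∧ d.val ≤ k then (1 : ℤ) else 0)
        ((Equiv.subRight x) i)
      = ∑ d : Fin (2 * k + 1), (if 1 ≤ d.val ∧ d.val ≤ k then (1 : ℤ) else 0) :=
    Equiv.sum_comp (Equiv.subRight x) (fun d : Fin (2 * k + 1) => if 1 ≤ d.val ∧ d.val ≤ k then (1 : ℤ) else 0)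
  rw [Finset.sum_congr rfl fun i _ => key i, h2,
    Fin.sum_univ_eq_sum_range (fun t => if 1 ≤ t ∧ t ≤ k then (1 : ℤ) else 0),
    Finset.sum_boole]
  have : (Finset.range (2 * k + 1)).filter (fun t => 1 ≤ t ∧ t ≤ k) = Finset.Ico 1 (k + 1) := by
    ext t; simp [Finset.mem_Ico, Nat.lt_succ_iff]; omega
  rw [this, Nat.card_Ico]
  norm_num

lemma reg_sum_in (m k : ℕ) (hm : m = 2 * k + 1) (x : Fin m) :
    ∑ i : Fin m, (if regN m i.val x.val then (1 : ℤ) else 0) = k := by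
  subst hm
  have key : ∀ i : Fin (2 * k + 1),
      (if regN (2 * k + 1) i.val x.val then (1 : ℤ) else 0)
        = (fun d : Fin (2 * k + 1) => if 1 ≤ d.val ∧ d.val ≤ k then (1 : ℤ) else 0)
            ((Equiv.subLeft x) i) := by
    intro i
    simp only [Equiv.subLeft_apply, Fin.sub_def, regN, decide_eq_true_eq]
    have hk : (2 * k + 1 - 1) / 2 = k := by omega
    rw [hk]
  have h2 : ∑ i : Fin (2 * k + 1),
      (fun d : Fin (2 * k + 1) => if 1 ≤ d.val ∧ d.val ≤ k then (1 : ℤ) else 0)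
        ((Equiv.subLeft x) i)
      = ∑ d : Fin (2 * k + 1), (if 1 ≤ d.val ∧ d.val ≤ k then (1 : ℤ) else 0) :=
    Equiv.sum_comp (Equiv.subLeft x) (fun d : Fin (2 * k + 1) => if 1 ≤ d.val ∧ d.val ≤ k then (1 : ℤ) else 0)
  rw [Finset.sum_congr rfl fun i _ => key i, h2,
    Fin.sum_univ_eq_sum_range (fun t => if 1 ≤ t ∧ t ≤ k then (1 : ℤ) else 0),
    Finset.sum_boole]
  have : (Finset.range (2 * k + 1)).filter (fun t => 1 ≤ t ∧ t ≤ k) = Finset.Ico 1 (k + 1) := by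
    ext t; simp [Finset.mem_Ico, Nat.lt_succ_iff]; omega
  rw [this, Nat.card_Ico]
  norm_num

lemma reg_ebal_sum (m k : ℕ) (hm : m = 2 * k + 1) (x : Fin m) :
    ∑ i : Fin m, ((if regN m x.val i.val then (1 : ℤ) else 0)
      - (if regN m i.val x.val then (1 : ℤ) else 0)) = 0 := by
  rw [Finset.sum_sub_distrib, reg_sum_out m k hm x, reg_sum_in m k hm x, sub_self]

lemma parity_sum (K k : ℕ) :
    ∑ t ∈ Finset.range (2 * k), (if (K + t) % 2 = 0 then (1 : ℤ) else -1) = 0 := by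
  induction k with
  | zero => simp
  | succ n ih =>
    rw [show 2 * (n + 1) = (2 * n) + 1 + 1 by ring, Finset.sum_range_succ,
      Finset.sum_range_succ, ih]
    by_cases h : (K + 2 * n) % 2 = 0
    · rw [if_pos h, if_neg (by omega)]; ring
    · rw [if_neg h, if_pos (by omega)]; ring

lemma parity_sum_fin (K M : ℕ) (hM : M % 2 = 0) :
    ∑ t : Fin M, (if (K + t.val) % 2 = 0 then (1 : ℤ) else -1) = 0 := by
  obtain ⟨k, hk⟩ : ∃ k, M = 2 * k := ⟨M / 2, by omega⟩
  subst hk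
  rw [Fin.sum_univ_eq_sum_range (fun t => if (K + t) % 2 = 0 then (1 : ℤ) else -1)]
  exact parity_sum K k

section Construction

variable {I : Type} [Fintype I] [DecidableEq I] (val : I → ℤ) (A B : I → ℕ)

/-- the big vertex type -/
abbrev Vc := Σ c : I, (Fin (B c) ⊕ Fin (A c))

/-- the big tournament -/
def bigR (v w : Vc A B) : Bool :=
  if val v.1 = val w.1 then
    match v.2, w.2 with
    | .inl i, .inl i' => regN (B v.1) i.val i'.val
    | .inl _, .inr _ => true
    | .inr _, .inl _ => false
    | .inr j, .inr j' => regN (A v.1) j.val j'.val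
  else (((finSumFinEquiv v.2).val + (finSumFinEquiv w.2).val) % 2 == 0)
    == decide (val v.1 < val w.1)

lemma bigR_irrefl (v : Vc A B) : bigR val A B v v = false := by
  rcases v with ⟨c, x | x⟩ <;> simp only [bigR, if_pos rfl] <;>
    exact regN_self _ _ x.2.le

lemma bigR_antisymm (hval : Function.Injective val)
    (hA : ∀ c, Odd (A c)) (hB : ∀ c, Odd (B c)) (v w : Vc A B) (hne : v ≠ w) :
    bigR val A B v w = !(bigR val A B w v) := by
  rcases v with ⟨c, x⟩
  rcases w with ⟨d, y⟩
  by_cases hcd : val c = val d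
  · have hcd' : c = d := hval hcd
    subst hcd'
    have hxy : x ≠ y := by
      rintro rfl; exact hne rfl
    obtain ⟨kB, hkB⟩ := hB c
    obtain ⟨kA, hkA⟩ := hA c
    rcases x with i | j <;> rcases y with i' | j' <;>
      simp only [bigR, if_pos rfl]
    · exact regN_antisymm (B c) kB i.val i'.val hkB i.2 i'.2
        (fun h => hxy (by simp [Fin.ext_iff, h]))
    · rfl
    · rfl
    · exact regN_antisymm (A c) kA j.val j'.val hkA j.2 j'.2
        (fun h => hxy (by simp [Fin.ext_iff, h]))
  · have hdc : ¬ val d = val c := fun h => hcd h.symm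
    simp only [bigR, if_neg hcd, if_neg hdc]
    rw [Nat.add_comm (finSumFinEquiv y).val (finSumFinEquiv x).val]
    rcases lt_trichotomy (val c) (val d) with h | h | h
    · simp only [h, decide_eq_true_eq, decide_eq_false_iff_not, not_lt.mpr h.le,
        decide_true, decide_false, asymm h, not_lt_of_gt]
      cases ((finSumFinEquiv x).val + (finSumFinEquiv y).val) % 2 == 0 <;> rfl
    · exact absurd h hcd
    · have h1 : ¬ val c < val d := not_lt_of_gt h
      simp only [h, h1, decide_true, decide_false]
      cases ((finSumFinEquiv x).val + (finSumFinEquiv y).val) % 2 == 0 <;> rfl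

variable {val A B}

lemma cross_sum_zero (hE : ∀ c, (B c + A c) % 2 = 0) {c d : I} (hcd : val c ≠ val d)
    (x : Fin (B c) ⊕ Fin (A c)) :
    ∑ u : Fin (B d) ⊕ Fin (A d), ebal (bigR val A B) ⟨c, x⟩ ⟨d, u⟩ = 0 := by
  have hdc : ¬ val d = val c := fun h => hcd h.symm
  set K := (finSumFinEquiv x).val with hK
  rcases lt_trichotomy (val c) (val d) with h | h | h
  · have key : ∀ u : Fin (B d) ⊕ Fin (A d),
        ebal (bigR val A B) ⟨c, x⟩ ⟨d, u⟩
          = (fun t : Fin (B d + A d) => if (K + t.val) % 2 = 0 then (1 : ℤ) else -1)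
              (finSumFinEquiv u) := by
      intro u
      simp only [ebal, bigR, if_neg hcd, if_neg hdc, ← hK]
      rw [Nat.add_comm (finSumFinEquiv u).val K]
      by_cases hp : (K + (finSumFinEquiv u).val) % 2 = 0 <;>
        simp [hp, h, asymm h, not_lt_of_gt]
    rw [Finset.sum_congr rfl fun u _ => key u]
    exact (Equiv.sum_comp finSumFinEquiv _).trans (parity_sum_fin K _ (hE d))
  · exact absurd h hcd
  · have h1 : ¬ val c < val d := not_lt_of_gt h
    have key : ∀ u : Fin (B d) ⊕ Fin (A d),
        ebal (bigR val A B) ⟨c, x⟩ ⟨d, u⟩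
          = -((fun t : Fin (B d + A d) => if (K + t.val) % 2 = 0 then (1 : ℤ) else -1)
              (finSumFinEquiv u)) := by
      intro u
      simp only [ebal, bigR, if_neg hcd, if_neg hdc, ← hK]
      rw [Nat.add_comm (finSumFinEquiv u).val K]
      by_cases hp : (K + (finSumFinEquiv u).val) % 2 = 0 <;>
        simp [hp, h, h1]
    have h2 : ∑ u : Fin (B d) ⊕ Fin (A d),
        (fun t : Fin (B d + A d) => if (K + t.val) % 2 = 0 then (1 : ℤ) else -1)
          (finSumFinEquiv u) = 0 :=
      (Equiv.sum_comp finSumFinEquiv _).trans (parity_sum_fin K _ (hE d))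
    rw [Finset.sum_congr rfl fun u _ => key u, Finset.sum_neg_distrib, h2, neg_zero]

lemma inner_sum_inl (hA : ∀ c, Odd (A c)) (hB : ∀ c, Odd (B c)) (c : I)
    (x : Fin (B c)) :
    ∑ u : Fin (B c) ⊕ Fin (A c), ebal (bigR val A B) ⟨c, Sum.inl x⟩ ⟨c, u⟩ = A c := by
  rw [Fintype.sum_sum_type]
  obtain ⟨kB, hkB⟩ := hB c
  have h1 : ∑ i : Fin (B c), ebal (bigR val A B) ⟨c, Sum.inl x⟩ ⟨c, Sum.inl i⟩ = 0 := by
    have : ∀ i : Fin (B c), ebal (bigR val A B) ⟨c, Sum.inl x⟩ ⟨c, Sum.inl i⟩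
        = ((if regN (B c) x.val i.val then (1 : ℤ) else 0)
          - (if regN (B c) i.val x.val then (1 : ℤ) else 0)) := by
      intro i; simp only [ebal, bigR, if_pos rfl, if_true]
    rw [Finset.sum_congr rfl fun i _ => this i]
    exact reg_ebal_sum (B c) kB hkB x
  have h2 : ∀ j : Fin (A c), ebal (bigR val A B) ⟨c, Sum.inl x⟩ ⟨c, Sum.inr j⟩ = 1 := by
    intro j; simp [ebal, bigR]
  rw [h1, Finset.sum_congr rfl fun j _ => h2 j]
  simp

lemma inner_sum_inr (hA : ∀ c, Odd (A c)) (hB : ∀ c, Odd (B c)) (c : I)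
    (x : Fin (A c)) :
    ∑ u : Fin (B c) ⊕ Fin (A c), ebal (bigR val A B) ⟨c, Sum.inr x⟩ ⟨c, u⟩ = -(B c) := by
  rw [Fintype.sum_sum_type]
  obtain ⟨kA, hkA⟩ := hA c
  have h2 : ∑ j : Fin (A c), ebal (bigR val A B) ⟨c, Sum.inr x⟩ ⟨c, Sum.inr j⟩ = 0 := by
    have : ∀ j : Fin (A c), ebal (bigR val A B) ⟨c, Sum.inr x⟩ ⟨c, Sum.inr j⟩
        = ((if regN (A c) x.val j.val then (1 : ℤ) else 0)
          - (if regN (A c) j.val x.val then (1 : ℤ) else 0)) := by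
      intro j; simp only [ebal, bigR, if_pos rfl, if_true]
    rw [Finset.sum_congr rfl fun j _ => this j]
    exact reg_ebal_sum (A c) kA hkA x
  have h1 : ∀ i : Fin (B c), ebal (bigR val A B) ⟨c, Sum.inr x⟩ ⟨c, Sum.inl i⟩ = -1 := by
    intro i; simp [ebal, bigR]
  rw [h2, Finset.sum_congr rfl fun i _ => h1 i]
  simp

lemma imbV_sigma (hval : Function.Injective val) (hE : ∀ c, (B c + A c) % 2 = 0)
    (c : I) (x : Fin (B c) ⊕ Fin (A c)) :
    imbV (bigR val A B) ⟨c, x⟩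
      = ∑ u : Fin (B c) ⊕ Fin (A c), ebal (bigR val A B) ⟨c, x⟩ ⟨c, u⟩ := by
  unfold imbV
  rw [← Finset.univ_sigma_univ, Finset.sum_sigma]
  rw [Finset.sum_eq_sum_sdiff_singleton_add (Finset.mem_univ c)]
  have : ∀ d ∈ Finset.univ \ {c},
      ∑ u : Fin (B d) ⊕ Fin (A d), ebal (bigR val A B) ⟨c, x⟩ ⟨d, u⟩ = 0 := by
    intro d hd
    have hdc : d ≠ c := by simpa using hd
    exact cross_sum_zero hE (fun h => hdc (hval h.symm)) x
  rw [Finset.sum_congr rfl this, Finset.sum_const, smul_zero, zero_add]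

end Construction

/-- transport to `Fin n` -/
lemma transport {α : Type} [Fintype α] [DecidableEq α] (r : α → α → Bool)
    (h1 : ∀ v, r v v = false) (h2 : ∀ v w, v ≠ w → r v w = !(r w v)) :
    ∃ (n : ℕ) (r' : Fin n → Fin n → Bool), IsTournament r' ∧
      imbalanceSet r' = Finset.image (imbV r) Finset.univ := by
  set e := Fintype.equivFin α with he
  refine ⟨Fintype.card α, fun i j => r (e.symm i) (e.symm j), ⟨fun i => h1 _, ?_⟩, ?_⟩
  · intro i j hij
    exact h2 _ _ (fun h => hij (by simpa using congrArg e h))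
  · unfold imbalanceSet
    have himb : ∀ i, imbalance (fun i j => r (e.symm i) (e.symm j)) i = imbV r (e.symm i) := by
      intro i
      rw [imbalance_eq_imbV]
      unfold imbV
      exact Equiv.sum_comp e.symm (fun w => ebal r (e.symm i) w)
    rw [Finset.image_congr (fun i _ => himb i)]
    have : Finset.image (fun i => imbV r (e.symm i)) Finset.univ
        = Finset.image (imbV r) (Finset.image e.symm Finset.univ) := by
      rw [Finset.image_image]; rfl
    rw [this, Finset.image_univ_equiv]

end OddImb

open OddImb

/-- A finite nonempty set of odd integers is a tournament imbalance
set iff it contains a positive and a negative integer. -/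
theorem odd_imbalanceSet_iff (Z : Finset ℤ) (hZne : Z.Nonempty)
    (hodd : ∀ z ∈ Z, Odd z) :
    (∃ (n : ℕ) (r : Fin n → Fin n → Bool), IsTournament r ∧ imbalanceSet r = Z) ↔
      (∃ z ∈ Z, 0 < z) ∧ (∃ z ∈ Z, z < 0) := by
  constructor
  · rintro ⟨n, r, hT, hset⟩
    -- the sum of imbalances is zero
    have hsum0 : ∑ i : Fin n, imbV r i = 0 := by
      unfold imbV ebal
      simp only [Finset.sum_sub_distrib]
      rw [sub_eq_zero]
      exact Finset.sum_comm
    have hmem : ∀ i : Fin n, imbV r i ∈ Z := by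
      intro i
      rw [← imbalance_eq_imbV, ← hset]
      exact Finset.mem_image_of_mem _ (Finset.mem_univ i)
    have hne : (Finset.univ : Finset (Fin n)).Nonempty := by
      obtain ⟨z, hz⟩ := hZne
      rw [← hset] at hz
      obtain ⟨i, hi, _⟩ := Finset.mem_image.mp hz
      exact ⟨i, hi⟩
    constructor
    · by_contra h
      push_neg at h
      have : ∀ i ∈ (Finset.univ : Finset (Fin n)), imbV r i < 0 := by
        intro i _
        have h1 := hmem i
        have h2 := h _ h1
        have h3 : imbV r i ≠ 0 := by
          intro h0
          have := hodd _ h1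
          rw [h0] at this
          rw [Int.odd_iff] at this; omega
        omega
      have := Finset.sum_neg this hne
      omega
    · by_contra h
      push_neg at h
      have : ∀ i ∈ (Finset.univ : Finset (Fin n)), 0 < imbV r i := by
        intro i _
        have h1 := hmem i
        have h2 := h _ h1
        have h3 : imbV r i ≠ 0 := by
          intro h0
          have := hodd _ h1
          rw [h0] at this
          rw [Int.odd_iff] at this; omega
        omega
      have := Finset.sum_pos this hne
      omega
  · rintro ⟨⟨p, hpZ, hp⟩, ⟨q, hqZ, hq⟩⟩
    have hz0 : ∀ z ∈ Z, z ≠ 0 := by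
      intro z hz h0
      have := hodd z hz
      rw [h0] at this
      rw [Int.odd_iff] at this; omega
    -- odd toNat facts
    have htoNat : ∀ z : ℤ, 0 < z → Odd z → Odd z.toNat := by
      intro z h1 h2
      rw [← Int.odd_coe_nat, Int.toNat_of_nonneg h1.le]
      exact h2
    set I := {z : ℤ // z ∈ Z}
    set A : I → ℕ := fun c => if 0 < c.val then c.val.toNat else p.toNat with hA_def
    set B : I → ℕ := fun c => if 0 < c.val then (-q).toNat else (-c.val).toNat with hB_def
    have hA : ∀ c : I, Odd (A c) := by
      intro c
      simp only [hA_def]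
      split_ifs with h
      · exact htoNat _ h (hodd _ c.2)
      · exact htoNat _ hp (hodd _ hpZ)
    have hB : ∀ c : I, Odd (B c) := by
      intro c
      simp only [hB_def]
      split_ifs with h
      · exact htoNat _ (by omega) ((hodd _ hqZ).neg)
      · have hc : c.val < 0 := by
          have := hz0 _ c.2; omega
        exact htoNat _ (by omega) ((hodd _ c.2).neg)
    have hE : ∀ c : I, (B c + A c) % 2 = 0 := by
      intro c
      have h1 := Nat.odd_iff.mp (hA c)
      have h2 := Nat.odd_iff.mp (hB c)
      omega
    have hval : Function.Injective (Subtype.val : I → ℤ) := Subtype.val_injective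
    obtain ⟨n, r', hT, hset⟩ := transport (bigR Subtype.val A B)
      (bigR_irrefl Subtype.val A B)
      (bigR_antisymm Subtype.val A B hval hA hB)
    refine ⟨n, r', hT, ?_⟩
    rw [hset]
    ext z
    simp only [Finset.mem_image, Finset.mem_univ, true_and]
    constructor
    · rintro ⟨⟨c, u | u⟩, hu⟩
      · rw [imbV_sigma hval hE, inner_sum_inl hA hB] at hu
        subst hu
        simp only [hA_def]
        split_ifs with h
        · rw [Int.toNat_of_nonneg h.le]; exact c.2
        · rwa [Int.toNat_of_nonneg hp.le]
      · rw [imbV_sigma hval hE, inner_sum_inr hA hB] at hu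
        subst hu
        simp only [hB_def]
        split_ifs with h
        · rw [Int.toNat_of_nonneg (by omega), neg_neg]
          exact hqZ
        · rw [Int.toNat_of_nonneg (by omega), neg_neg]
          exact c.2
    · intro hz
      have hzz := hz0 z hz
      rcases lt_or_gt_of_ne hzz with h | h
      · -- z < 0 : use a loser vertex in component z
        have hApos : 0 < A ⟨z, hz⟩ := by
          simp only [hA_def, if_neg (by omega : ¬ (0:ℤ) < z)]
          omega
        refine ⟨⟨⟨z, hz⟩, Sum.inr ⟨0, hApos⟩⟩, ?_⟩
        rw [imbV_sigma hval hE, inner_sum_inr hA hB]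
        simp only [hB_def, if_neg (by omega : ¬ (0:ℤ) < z)]
        rw [Int.toNat_of_nonneg (by omega), neg_neg]
      · have hBpos : 0 < B ⟨z, hz⟩ := by
          simp only [hB_def, if_pos h]
          omega
        refine ⟨⟨⟨z, hz⟩, Sum.inl ⟨0, hBpos⟩⟩, ?_⟩
        rw [imbV_sigma hval hE, inner_sum_inl hA hB]
        simp only [hA_def, if_pos h]
        rw [Int.toNat_of_nonneg h.le]
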